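/- arXiv:1410.3069 — 4 statements merged into one kernel-verified Lean document; each statement's English description precedes it below -/
import Mathlib

section
/- For x̃ ∈ M̃ and a tangent vector v of M̃ at x̃ (i.e. v₁x̃₁ + v₂x̃₂ + v₃x̃₃ = 0), the image J v under the Jacobian J of Φ satisfies |J v|² = (1 + x̃₄/a)²(v₁² + v₂² + v₃²) + v₄². In particular, the pullback by Φ of the Euclidean metric on ℝ³ to M̃ is the shallow-atmosphere metric. -/
/-- for x̃ ∈ M̃ and v tangent to M̃ at x̃ (v₁x̃₁+v₂x̃₂+v₃x̃₃ = 0),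
|J v|² = (1 + x̃₄/a)²(v₁²+v₂²+v₃²) + v₄²: the pullback by Φ of the Euclidean
metric on ℝ³ is the shallow-atmosphere metric. -/
theorem pullback_metric_is_shallow_atmosphere_metric
    (a H : ℝ) (ha : 0 < a) (hH : 0 < H)
    (Φ : (Fin 4 → ℝ) → (Fin 3 → ℝ))
    (hΦ : ∀ x : Fin 4 → ℝ, ∀ i : Fin 3, Φ x i = (1 + x 3 / a) * x i.castSucc)
    (x : Fin 4 → ℝ)
    (hx : (x 0) ^ 2 + (x 1) ^ 2 + (x 2) ^ 2 = a ^ 2)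
    (hx4l : 0 ≤ x 3) (hx4u : x 3 ≤ H)
    (v : Fin 4 → ℝ)
    (hv : v 0 * x 0 + v 1 * x 1 + v 2 * x 2 = 0) :
    ∑ i : Fin 3, (fderiv ℝ Φ x v i) ^ 2 =
      (1 + x 3 / a) ^ 2 * ((v 0) ^ 2 + (v 1) ^ 2 + (v 2) ^ 2) + (v 3) ^ 2 := by
  have hΦ' : Φ = fun x => fun i : Fin 3 => (1 + x 3 / a) * x i.castSucc := by
    funext y i; exact hΦ y i
  subst hΦ'
  have hcomp : ∀ i : Fin 3, HasFDerivAt (fun y : Fin 4 → ℝ => (1 + y 3 / a) * y i.castSucc)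
      ((1 + x 3 / a) • (ContinuousLinearMap.proj i.castSucc : (Fin 4 → ℝ) →L[ℝ] ℝ) +
       (x i.castSucc) • ((1/a) • (ContinuousLinearMap.proj 3 : (Fin 4 → ℝ) →L[ℝ] ℝ))) x := by
    intro i
    have h3 : HasFDerivAt (fun y : Fin 4 → ℝ => 1 + y 3 / a)
        ((1/a) • (ContinuousLinearMap.proj 3 : (Fin 4 → ℝ) →L[ℝ] ℝ)) x := by
      have h := ((hasFDerivAt_apply (𝕜 := ℝ) (3 : Fin 4) x).mul_const (a⁻¹)).const_add 1
      have heq : (fun y : Fin 4 → ℝ => 1 + y 3 / a) = fun y : Fin 4 → ℝ => 1 + y 3 * a⁻¹ := by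
        funext y; rw [div_eq_mul_inv]
      rw [heq]
      refine h.congr_fderiv ?_
      ext w
      simp [mul_comm]
    exact h3.mul (hasFDerivAt_apply (𝕜 := ℝ) i.castSucc x)
  have hF : HasFDerivAt (fun y : Fin 4 → ℝ => fun i : Fin 3 => (1 + y 3 / a) * y i.castSucc)
      (ContinuousLinearMap.pi (fun i : Fin 3 =>
        (1 + x 3 / a) • (ContinuousLinearMap.proj i.castSucc : (Fin 4 → ℝ) →L[ℝ] ℝ) +
        (x i.castSucc) • ((1/a) • (ContinuousLinearMap.proj 3 : (Fin 4 → ℝ) →L[ℝ] ℝ)))) x :=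
    hasFDerivAt_pi.2 hcomp
  rw [hF.fderiv]
  have key : ∀ i : Fin 3,
      (ContinuousLinearMap.pi (fun i : Fin 3 =>
        (1 + x 3 / a) • (ContinuousLinearMap.proj i.castSucc : (Fin 4 → ℝ) →L[ℝ] ℝ) +
        (x i.castSucc) • ((1/a) • (ContinuousLinearMap.proj 3 : (Fin 4 → ℝ) →L[ℝ] ℝ)))) v i
      = (1 + x 3 / a) * v i.castSucc + x i.castSucc * (v 3 / a) := by
    intro i
    simp [ContinuousLinearMap.pi_apply, div_eq_mul_inv, mul_comm, mul_assoc]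
  rw [Fin.sum_univ_three, key 0, key 1, key 2]
  show ((1 + x 3 / a) * v 0 + x 0 * (v 3 / a))^2 + ((1 + x 3 / a) * v 1 + x 1 * (v 3 / a))^2
    + ((1 + x 3 / a) * v 2 + x 2 * (v 3 / a))^2 = _
  have ha' : a ≠ 0 := ne_of_gt ha
  field_simp
  linear_combination (v 3)^2 * hx + 2 * (a + x 3) * (v 3) * hv
end

section
/- The pseudodeterminant of the Jacobian J of Φ at x̃ ∈ M̃, defined as the product of the nonzero singular values of J restricted to the tangent space of M̃, equals (1 + x̃₄/a)². -/
open Matrix in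
private lemma pseudodet_aux_sum (a : ℝ) (ha : 0 < a)
    (x : Fin 4 → ℝ)
    (hx : (x 0) ^ 2 + (x 1) ^ 2 + (x 2) ^ 2 = a ^ 2)
    (b : Fin 3 → (Fin 4 → ℝ))
    (hbtangent : ∀ i : Fin 3, b i 0 * x 0 + b i 1 * x 1 + b i 2 * x 2 = 0)
    (hborthonormal : ∀ i j : Fin 3,
      ∑ k : Fin 4, b i k * b j k = if i = j then (1 : ℝ) else 0) :
    b 0 3 ^ 2 + b 1 3 ^ 2 + b 2 3 ^ 2 = 1 := by
  have ha' : a ≠ 0 := ne_of_gt ha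
  set B : Matrix (Fin 4) (Fin 4) ℝ :=
    Matrix.of ![![x 0 / a, x 1 / a, x 2 / a, 0], b 0, b 1, b 2] with hB
  have horth : ∀ i j : Fin 3, b i 0 * b j 0 + b i 1 * b j 1 + b i 2 * b j 2 + b i 3 * b j 3
      = if i = j then (1:ℝ) else 0 := by
    intro i j; rw [← Fin.sum_univ_four fun k => b i k * b j k]; exact hborthonormal i j
  have hBBT : B * Bᵀ = 1 := by
    ext r s
    rw [Matrix.mul_apply, Fin.sum_univ_four]
    simp only [Matrix.transpose_apply]
    fin_cases r <;> fin_cases s <;>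
      simp [hB, Matrix.one_apply] <;>
      [ (field_simp; linarith [hx]);
        (have := hbtangent 0; field_simp; linarith);
        (have := hbtangent 1; field_simp; linarith);
        (have := hbtangent 2; field_simp; linarith);
        (have := hbtangent 0; field_simp; linarith);
        (have h := horth 0 0; simp at h; linarith);
        (have h := horth 0 1; simp at h; linarith);
        (have h := horth 0 2; simp at h; linarith);
        (have := hbtangent 1; field_simp; linarith);
        (have h := horth 1 0; simp at h; linarith);
        (have h := horth 1 1; simp at h; linarith);
        (have h := horth 1 2; simp at h; linarith);
        (have := hbtangent 2; field_simp; linarith);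
        (have h := horth 2 0; simp at h; linarith);
        (have h := horth 2 1; simp at h; linarith);
        (have h := horth 2 2; simp at h; linarith)]
  have hTBB : Bᵀ * B = 1 := mul_eq_one_comm.mp hBBT
  have h33 := congrFun (congrFun hTBB 3) 3
  rw [Matrix.mul_apply, Fin.sum_univ_four] at h33
  simp only [Matrix.transpose_apply] at h33
  simp [hB, Matrix.one_apply] at h33
  nlinarith [h33]


open Matrix ContinuousLinearMap in
/-- the pseudodeterminant of J (product of the nonzero singular
values of J restricted to the tangent space of M̃ at x̃) equals (1 + x̃₄/a)².
Formulated via the Gram matrix: for any orthonormal basis b₀,b₁,b₂ of the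
tangent space, √(det Gᵢⱼ) = (1 + x̃₄/a)² where Gᵢⱼ = (J bᵢ)·(J bⱼ). -/
theorem pseudodeterminant_of_jacobian
    (a : ℝ) (ha : 0 < a)
    (Φ : (Fin 4 → ℝ) → (Fin 3 → ℝ))
    (hΦ : ∀ x : Fin 4 → ℝ, ∀ i : Fin 3, Φ x i = (1 + x 3 / a) * x i.castSucc)
    (x : Fin 4 → ℝ)
    (hx : (x 0) ^ 2 + (x 1) ^ 2 + (x 2) ^ 2 = a ^ 2)
    (hx4 : 0 ≤ x 3)
    (b : Fin 3 → (Fin 4 → ℝ))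
    (hbtangent : ∀ i : Fin 3, b i 0 * x 0 + b i 1 * x 1 + b i 2 * x 2 = 0)
    (hborthonormal : ∀ i j : Fin 3,
      ∑ k : Fin 4, b i k * b j k = if i = j then (1 : ℝ) else 0) :
    Real.sqrt (Matrix.det (Matrix.of fun i j : Fin 3 =>
        ∑ k : Fin 3, fderiv ℝ Φ x (b i) k * fderiv ℝ Φ x (b j) k)) =
      (1 + x 3 / a) ^ 2 := by
  have ha' : a ≠ 0 := ne_of_gt ha
  -- Step 1: compute the Jacobian
  have hΦeq : Φ = fun y (k : Fin 3) => (1 + y 3 / a) * y k.castSucc :=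
    funext fun y => funext (hΦ y)
  have hder : HasFDerivAt (𝕜 := ℝ) Φ
      (ContinuousLinearMap.pi fun k : Fin 3 =>
        (1 + x 3 / a) • proj k.castSucc + (x k.castSucc) • (a⁻¹ • proj 3)) x := by
    rw [hΦeq]
    apply hasFDerivAt_pi.2
    intro k
    have h1 : HasFDerivAt (fun y : Fin 4 → ℝ => 1 + y 3 / a)
        (a⁻¹ • proj 3 : (Fin 4 → ℝ) →L[ℝ] ℝ) x := by
      simpa [div_eq_inv_mul] using ((hasFDerivAt_apply 3 x).const_mul a⁻¹).const_add 1
    exact h1.mul (hasFDerivAt_apply k.castSucc x)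
  have hJ : ∀ v : Fin 4 → ℝ, ∀ k : Fin 3,
      fderiv ℝ Φ x v k = x k.castSucc / a * v 3 + (1 + x 3 / a) * v k.castSucc := by
    intro v k
    rw [hder.fderiv]
    simp [ContinuousLinearMap.proj_apply, smul_eq_mul]
    ring
  -- Step 2: Gram matrix entries
  have hG : ∀ i j : Fin 3, (∑ k : Fin 3, fderiv ℝ Φ x (b i) k * fderiv ℝ Φ x (b j) k) =
      (1 + x 3 / a)^2 * (if i = j then 1 else 0)
        + (1 - (1 + x 3 / a)^2) * (b i 3 * b j 3) := by
    intro i j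
    have horth : b i 0 * b j 0 + b i 1 * b j 1 + b i 2 * b j 2 + b i 3 * b j 3
        = if i = j then (1:ℝ) else 0 := by
      rw [← Fin.sum_univ_four fun k => b i k * b j k]; exact hborthonormal i j
    have ti := hbtangent i
    have tj := hbtangent j
    rw [Fin.sum_univ_three]
    simp only [hJ]
    have h0 : (0 : Fin 3).castSucc = 0 := rfl
    have h1 : (1 : Fin 3).castSucc = 1 := rfl
    have h2 : (2 : Fin 3).castSucc = 2 := rfl
    rw [h0, h1, h2]
    rcases eq_or_ne i j with h | h
    · rw [if_pos h] at horth ⊢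
      subst h
      linear_combination (norm := skip) (b i 3 * b i 3 / a^2) * hx + (2 * (1 + x 3 / a) * b i 3 / a) * ti
        + (1 + x 3 / a)^2 * horth
      field_simp
      ring
    · rw [if_neg h] at horth ⊢
      linear_combination (norm := skip) (b i 3 * b j 3 / a^2) * hx + ((1 + x 3 / a) * b j 3 / a) * ti
        + ((1 + x 3 / a) * b i 3 / a) * tj + (1 + x 3 / a)^2 * horth
      field_simp
      ring
  -- Step 3: completeness: the fourth components of b form a unit vector
  have hsum : b 0 3 ^ 2 + b 1 3 ^ 2 + b 2 3 ^ 2 = 1 :=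
    pseudodet_aux_sum a ha x hx b hbtangent hborthonormal
  -- Step 4: determinant
  have hdet : Matrix.det (Matrix.of fun i j : Fin 3 =>
      ∑ k : Fin 3, fderiv ℝ Φ x (b i) k * fderiv ℝ Φ x (b j) k)
      = ((1 + x 3 / a) ^ 2) ^ 2 := by
    rw [Matrix.det_fin_three]
    simp only [Matrix.of_apply, hG]
    simp only [Fin.reduceEq, reduceIte, if_true, mul_one, mul_zero, add_zero, zero_add]
    linear_combination ((1 + x 3 / a)^4 * (1 - (1 + x 3 / a)^2)) * hsum
  rw [hdet, Real.sqrt_sq (by positivity)]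
end

section
/- For x̃ ∈ M̃ with x̃₄ > 0, the Jacobian J of Φ at x̃, restricted to the tangent space of M̃, is not an isometry; specifically there exists a unit tangent vector v with |Jv| = 1 + x̃₄/a > 1. -/
/-- for x̃ ∈ M̃ with x̃₄ > 0, J restricted to the tangent space is
not an isometry: there is a unit tangent vector v with |Jv| = 1 + x̃₄/a > 1. -/
theorem jacobian_not_isometry
    (a : ℝ) (ha : 0 < a)
    (Φ : (Fin 4 → ℝ) → (Fin 3 → ℝ))
    (hΦ : ∀ x : Fin 4 → ℝ, ∀ i : Fin 3, Φ x i = (1 + x 3 / a) * x i.castSucc)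
    (x : Fin 4 → ℝ)
    (hx : (x 0) ^ 2 + (x 1) ^ 2 + (x 2) ^ 2 = a ^ 2)
    (hx4 : 0 < x 3) :
    ∃ v : Fin 4 → ℝ,
      v 0 * x 0 + v 1 * x 1 + v 2 * x 2 = 0 ∧
      ∑ i : Fin 4, (v i) ^ 2 = 1 ∧
      Real.sqrt (∑ i : Fin 3, (fderiv ℝ Φ x v i) ^ 2) = 1 + x 3 / a ∧
      1 < 1 + x 3 / a := by
  set D : (Fin 4 → ℝ) →L[ℝ] (Fin 3 → ℝ) :=
    ContinuousLinearMap.pi (fun i : Fin 3 =>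
      (1 + x 3 / a) • ContinuousLinearMap.proj i.castSucc
        + x i.castSucc • (a⁻¹ • ContinuousLinearMap.proj (3 : Fin 4))) with hD
  have hΦeq : Φ = fun y : Fin 4 → ℝ => fun i : Fin 3 => (1 + y 3 / a) * y i.castSucc :=
    funext fun y => funext fun i => hΦ y i
  have hder : HasFDerivAt Φ D x := by
    rw [hΦeq, hD]
    refine hasFDerivAt_pi.2 fun i => ?_
    have hf : HasFDerivAt (fun y : Fin 4 → ℝ => 1 + y 3 / a)
        ((a⁻¹ • ContinuousLinearMap.proj (3 : Fin 4)) : (Fin 4 → ℝ) →L[ℝ] ℝ) x := by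
      have := (((a⁻¹ • ContinuousLinearMap.proj (3 : Fin 4)) :
        (Fin 4 → ℝ) →L[ℝ] ℝ).hasFDerivAt (x := x)).const_add (1:ℝ)
      simpa [div_eq_inv_mul] using this
    have hg : HasFDerivAt (fun y : Fin 4 → ℝ => y i.castSucc)
        ((ContinuousLinearMap.proj i.castSucc) : (Fin 4 → ℝ) →L[ℝ] ℝ) x := hasFDerivAt_apply i.castSucc x
    exact hf.mul hg
  have hfd : ∀ v : Fin 4 → ℝ, ∀ i : Fin 3,
      fderiv ℝ Φ x v i = (1 + x 3 / a) * v i.castSucc + x i.castSucc * (a⁻¹ * v 3) := by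
    intro v i
    rw [hder.fderiv, hD]
    simp [ContinuousLinearMap.pi_apply, mul_comm]
  have hgt : 1 < 1 + x 3 / a := by
    have : 0 < x 3 / a := div_pos hx4 ha
    linarith
  have hnn : (0:ℝ) ≤ 1 + x 3 / a := by linarith
  by_cases h01 : x 0 = 0 ∧ x 1 = 0
  · refine ⟨![1, 0, 0, 0], by simp [h01.1], by simp [Fin.sum_univ_four], ?_, hgt⟩
    have hs : (∑ i : Fin 3, (fderiv ℝ Φ x ![1, 0, 0, 0] i) ^ 2) = (1 + x 3 / a) ^ 2 := by
      rw [Fin.sum_univ_three, hfd, hfd, hfd]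
      simp only [show ((0:Fin 3).castSucc = (0 : Fin 4)) from rfl,
        show ((1:Fin 3).castSucc = (1 : Fin 4)) from rfl,
        show ((2:Fin 3).castSucc = (2 : Fin 4)) from rfl]
      norm_num
      simp
    rw [hs, Real.sqrt_sq hnn]
  · set r : ℝ := Real.sqrt ((x 0) ^ 2 + (x 1) ^ 2) with hr
    have hrpos : 0 < (x 0) ^ 2 + (x 1) ^ 2 := by
      rcases not_and_or.1 h01 with h | h <;> positivity
    have hr0 : 0 < r := Real.sqrt_pos.2 hrpos
    have hr2 : r ^ 2 = (x 0) ^ 2 + (x 1) ^ 2 := Real.sq_sqrt hrpos.le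
    refine ⟨![-(x 1) / r, x 0 / r, 0, 0], by simp; field_simp; ring, ?_, ?_, hgt⟩
    · rw [Fin.sum_univ_four]
      simp
      field_simp
      rw [hr2]; ring
    · have hs : (∑ i : Fin 3, (fderiv ℝ Φ x ![-(x 1) / r, x 0 / r, 0, 0] i) ^ 2)
          = (1 + x 3 / a) ^ 2 := by
        rw [Fin.sum_univ_three, hfd, hfd, hfd]
        simp only [show ((0:Fin 3).castSucc = (0 : Fin 4)) from rfl,
          show ((1:Fin 3).castSucc = (1 : Fin 4)) from rfl,
          show ((2:Fin 3).castSucc = (2 : Fin 4)) from rfl]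
        norm_num
        simp
        field_simp
        linear_combination (-1 : ℝ) * hr2
      rw [hs, Real.sqrt_sq hnn]
end

section
/- For the shallow-atmosphere map Φ and density transformation ρ = (1/det J) ρ̃ ∘ Φ⁻¹ with det J = (1 + x̃₄/a)², the change-of-variables formula holds: the integral of ρ over M (with respect to 3-dimensional Lebesgue measure on the annulus) equals the integral of ρ̃ over M̃ (with respect to the surface measure induced from ℝ⁴, which equals the product of the sphere's surface measure and Lebesgue measure in x̃₄). -/
open MeasureTheory Set Metric Measure

/-- change of variables for the shallow-atmosphere map. With
ρ = (1/det J) ρ̃ ∘ Φ⁻¹ and det J = (1 + x̃₄/a)² = (‖x‖/a)², the integral of ρ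
over the annulus M (3-d Lebesgue measure) equals the integral of ρ̃ over
M̃ = S²_a × [0,H], the latter written via the unit sphere surface measure
(`volume.toSphere`, with area element scaled by a²) times Lebesgue measure
in x̃₄. -/
theorem shallow_atmosphere_change_of_variables
    (a H : ℝ) (ha : 0 < a) (hH : 0 < H)
    (ρt : EuclideanSpace ℝ (Fin 3) × ℝ → ℝ)
    (hρt : Continuous ρt)
    (M : Set (EuclideanSpace ℝ (Fin 3)))
    (hM : M = {x | a ≤ ‖x‖ ∧ ‖x‖ ≤ a + H})
    (ρ : EuclideanSpace ℝ (Fin 3) → ℝ)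
    (hρ : ∀ x : EuclideanSpace ℝ (Fin 3), x ≠ 0 →
      ρ x = (a / ‖x‖) ^ 2 * ρt ((a / ‖x‖) • x, ‖x‖ - a)) :
    ∫ x in M, ρ x =
      ∫ s : Metric.sphere (0 : EuclideanSpace ℝ (Fin 3)) 1,
        (a ^ 2 * ∫ t in Set.Icc (0 : ℝ) H,
          ρt (a • (s : EuclideanSpace ℝ (Fin 3)), t))
        ∂(volume : Measure (EuclideanSpace ℝ (Fin 3))).toSphere := by
  set ρ' : EuclideanSpace ℝ (Fin 3) → ℝ :=
    fun x => (a / ‖x‖) ^ 2 * ρt ((a / ‖x‖) • x, ‖x‖ - a) with hρ'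
  set f : EuclideanSpace ℝ (Fin 3) → ℝ := M.indicator ρ' with hf
  have hMeq : M = (fun x : EuclideanSpace ℝ (Fin 3) => ‖x‖) ⁻¹' Icc a (a + H) := by
    rw [hM]; ext x; simp [Set.mem_Icc]
  have hMmeas : MeasurableSet M := by
    rw [hMeq]; exact measurable_norm measurableSet_Icc
  have hMne0 : ∀ x ∈ M, x ≠ 0 := by
    intro x hx h0
    rw [hM] at hx
    simp [h0] at hx
    linarith [hx.1]
  have hcomp : IsCompact M := by
    refine Metric.isCompact_of_isClosed_isBounded ?_ ?_
    · rw [hMeq]; exact isClosed_Icc.preimage continuous_norm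
    · refine (Metric.isBounded_closedBall
        (x := (0 : EuclideanSpace ℝ (Fin 3))) (r := a + H)).subset ?_
      intro x hx
      rw [hM] at hx
      exact mem_closedBall_zero_iff.mpr hx.2
  have hρ'cont : ContinuousOn ρ' {x : EuclideanSpace ℝ (Fin 3) | x ≠ 0} := by
    refine continuousOn_of_forall_continuousAt fun x hx => ?_
    have hn : ‖x‖ ≠ 0 := norm_ne_zero_iff.mpr hx
    have h1 : ContinuousAt (fun x : EuclideanSpace ℝ (Fin 3) => a / ‖x‖) x :=
      continuousAt_const.div continuous_norm.continuousAt hn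
    exact ((h1.pow 2).mul (hρt.continuousAt.comp
      ((h1.smul continuousAt_id).prodMk (continuous_norm.continuousAt.sub continuousAt_const))))
  have hintf : Integrable f volume := by
    refine IntegrableOn.integrable_indicator ?_ hMmeas
    refine ContinuousOn.integrableOn_compact hcomp ?_
    exact hρ'cont.mono (fun x hx => hMne0 x hx)
  -- Step A: replace ρ by its explicit formula, as a global indicator integral
  have stepA : ∫ x in M, ρ x = ∫ x, f x := by
    rw [hf, ← integral_indicator hMmeas]
    congr 1
    exact Set.indicator_congr fun x hx => hρ x (hMne0 x hx)
  -- polar coordinates setup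
  have h2 : Module.finrank ℝ (EuclideanSpace ℝ (Fin 3)) - 1 = 2 := by
    simp [finrank_euclideanSpace]
  have mp :=
    (volume : Measure (EuclideanSpace ℝ (Fin 3))).measurePreserving_homeomorphUnitSphereProd
  rw [h2] at mp
  set g : sphere (0 : EuclideanSpace ℝ (Fin 3)) 1 × Ioi (0:ℝ) → ℝ :=
    fun p => f ((p.2 : ℝ) • (p.1 : EuclideanSpace ℝ (Fin 3))) with hg
  have hcomp_eq : (fun x : ({0}ᶜ : Set (EuclideanSpace ℝ (Fin 3))) =>
      g (homeomorphUnitSphereProd (EuclideanSpace ℝ (Fin 3)) x)) = fun x => f x.1 := by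
    funext x
    simp only [hg, homeomorphUnitSphereProd_apply_snd_coe, homeomorphUnitSphereProd_apply_fst_coe]
    rw [smul_inv_smul₀ (norm_ne_zero_iff.mpr x.2)]
  have stepB : ∫ x, f x = ∫ x : ({0}ᶜ : Set (EuclideanSpace ℝ (Fin 3))), f x
      ∂((volume : Measure (EuclideanSpace ℝ (Fin 3))).comap Subtype.val) := by
    rw [integral_subtype_comap (measurableSet_singleton 0).compl, restrict_compl_singleton]
  have stepC : ∫ x : ({0}ᶜ : Set (EuclideanSpace ℝ (Fin 3))), f x
      ∂((volume : Measure (EuclideanSpace ℝ (Fin 3))).comap Subtype.val)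
      = ∫ p, g p ∂(((volume : Measure (EuclideanSpace ℝ (Fin 3))).toSphere).prod
          (volumeIoiPow 2)) := by
    rw [← hcomp_eq]
    exact mp.integral_comp (Homeomorph.measurableEmbedding _) g
  have hintg : Integrable g
      (((volume : Measure (EuclideanSpace ℝ (Fin 3))).toSphere).prod (volumeIoiPow 2)) := by
    rw [← mp.integrable_comp_emb (Homeomorph.measurableEmbedding _)]
    have : g ∘ (homeomorphUnitSphereProd (EuclideanSpace ℝ (Fin 3))) =
        (f ∘ Subtype.val) := funext fun x => congrFun hcomp_eq x
    rw [this, ← (MeasurableEmbedding.subtype_coe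
        (measurableSet_singleton (0 : EuclideanSpace ℝ (Fin 3))).compl).integrable_map_iff,
      map_comap_subtype_coe (measurableSet_singleton _).compl, restrict_compl_singleton]
    exact hintf
  have stepE := integral_prod g hintg
  -- Step F: the inner (radial) integral, for a fixed point on the sphere
  have stepF : ∀ s : sphere (0 : EuclideanSpace ℝ (Fin 3)) 1,
      (∫ r : Ioi (0:ℝ), f ((r : ℝ) • (s : EuclideanSpace ℝ (Fin 3))) ∂(volumeIoiPow 2))
        = a ^ 2 * ∫ t in Icc (0:ℝ) H, ρt (a • (s : EuclideanSpace ℝ (Fin 3)), t) := by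
    intro s
    have hs1 : ‖(s : EuclideanSpace ℝ (Fin 3))‖ = 1 := mem_sphere_zero_iff_norm.mp s.2
    simp only [Measure.volumeIoiPow, ENNReal.ofReal]
    rw [integral_withDensity_eq_integral_smul
      ((measurable_subtype_coe.pow_const _).real_toNNReal)]
    rw [integral_subtype_comap measurableSet_Ioi
      (fun r : ℝ => Real.toNNReal (r ^ 2) • f (r • (s : EuclideanSpace ℝ (Fin 3))))]
    have key : ∀ r ∈ Ioi (0:ℝ),
        Real.toNNReal (r ^ 2) • f (r • (s : EuclideanSpace ℝ (Fin 3)))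
        = (Icc a (a+H)).indicator
            (fun r => a ^ 2 * ρt (a • (s : EuclideanSpace ℝ (Fin 3)), r - a)) r := by
      intro r hr
      have hr0 : (0:ℝ) < r := hr
      have hnorm : ‖r • (s : EuclideanSpace ℝ (Fin 3))‖ = r := by
        rw [norm_smul, hs1, Real.norm_eq_abs, abs_of_pos hr0, mul_one]
      have hmemiff : r • (s : EuclideanSpace ℝ (Fin 3)) ∈ M ↔ r ∈ Icc a (a+H) := by
        rw [hM]; simp [hnorm, Set.mem_Icc]
      by_cases hmem : r ∈ Icc a (a+H)
      · rw [hf, Set.indicator_of_mem (hmemiff.mpr hmem), Set.indicator_of_mem hmem, hρ']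
        simp only [hnorm]
        have hsc : (a / r) • (r • (s : EuclideanSpace ℝ (Fin 3)))
            = a • (s : EuclideanSpace ℝ (Fin 3)) := by
          rw [smul_smul, div_mul_cancel₀ _ hr0.ne']
        rw [hsc, NNReal.smul_def, Real.coe_toNNReal _ (sq_nonneg r), smul_eq_mul, ← mul_assoc]
        congr 1
        field_simp
      · rw [hf, Set.indicator_of_notMem (fun h => hmem (hmemiff.mp h)),
          Set.indicator_of_notMem hmem, smul_zero]
    have hinter : Ioi (0:ℝ) ∩ Icc a (a+H) = Icc a (a+H) :=
      Set.inter_eq_self_of_subset_right (fun x hx => lt_of_lt_of_le ha hx.1)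
    rw [setIntegral_congr_fun measurableSet_Ioi key, setIntegral_indicator measurableSet_Icc,
      hinter, integral_const_mul]
    congr 1
    rw [integral_Icc_eq_integral_Ioc, integral_Icc_eq_integral_Ioc,
      ← intervalIntegral.integral_of_le (by linarith : a ≤ a + H),
      ← intervalIntegral.integral_of_le hH.le,
      intervalIntegral.integral_comp_sub_right
        (fun t => ρt (a • (s : EuclideanSpace ℝ (Fin 3)), t)) a]
    norm_num
  rw [stepA, stepB, stepC, stepE]
  exact integral_congr_ae (Filter.Eventually.of_forall fun s => stepF s)
end
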